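/- Let m > 0, λ ∈ ℝ and p > 1. Suppose φ, χ : ℝ → ℂ are differentiable and solve the one-dimensional nonlinear Dirac system φ' = −(λ + m + (|φ|² + |χ|²)^{1/(p−1)}) χ, χ' = (λ − m + (|φ|² + |χ|²)^{1/(p−1)}) φ on ℝ. Then the functions x ↦ H(φ(x), χ(x)) := m(|χ(x)|² − |φ(x)|²) + λ(|χ(x)|² + |φ(x)|²) + ((p−1)/p)(|χ(x)|² + |φ(x)|²)^{p/(p−1)} and x ↦ G(φ(x), χ(x)) := conj(χ(x)) φ(x) − conj(φ(x)) χ(x) are constant on ℝ. -/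

import Mathlib

open Complex

private lemma normsq_re' (z : ℂ) : ((starRingEnd ℂ) z * z).re = ‖z‖^2 := by
  rw [Complex.conj_mul']; norm_cast

private lemma re_conj_swap (z w : ℂ) :
    ((starRingEnd ℂ) z * w).re = ((starRingEnd ℂ) w * z).re := by
  simp [Complex.mul_re, Complex.conj_re, Complex.conj_im]; ring

private lemma hasDerivAt_normSq' {u : ℝ → ℂ} {u' : ℂ} {x : ℝ} (h : HasDerivAt u u' x) :
    HasDerivAt (fun x => ‖u x‖ ^ 2) (2 * ((starRingEnd ℂ) (u x) * u').re) x := by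
  have h1 : HasDerivAt (fun x => (starRingEnd ℂ) (u x) * u x)
      ((starRingEnd ℂ) u' * u x + (starRingEnd ℂ) (u x) * u') x := h.star.mul h
  have h2 : HasDerivAt (fun x => ((starRingEnd ℂ) (u x) * u x).re)
      (((starRingEnd ℂ) u' * u x + (starRingEnd ℂ) (u x) * u').re) x :=
    Complex.reCLM.hasFDerivAt.comp_hasDerivAt x h1
  have heq : (fun x => ((starRingEnd ℂ) (u x) * u x).re) = fun x => ‖u x‖ ^ 2 :=
    funext fun t => normsq_re' (u t)
  rw [heq] at h2
  convert h2 using 1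
  rw [Complex.add_re, re_conj_swap u' (u x)]
  ring

theorem oneDim_nonlinear_dirac_conserved
    (m lam p : ℝ) (hm : 0 < m) (hp : 1 < p)
    (φ χ : ℝ → ℂ)
    (hφ : Differentiable ℝ φ) (hχ : Differentiable ℝ χ)
    (hode : ∀ x, deriv φ x
        = -(((lam + m + (‖φ x‖ ^ 2 + ‖χ x‖ ^ 2) ^ (1 / (p - 1)) : ℝ)) : ℂ) * χ x)
    (hode' : ∀ x, deriv χ x
        = (((lam - m + (‖φ x‖ ^ 2 + ‖χ x‖ ^ 2) ^ (1 / (p - 1)) : ℝ)) : ℂ) * φ x) :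
    (∀ x y : ℝ,
      m * (‖χ x‖ ^ 2 - ‖φ x‖ ^ 2) + lam * (‖χ x‖ ^ 2 + ‖φ x‖ ^ 2)
          + (p - 1) / p * (‖χ x‖ ^ 2 + ‖φ x‖ ^ 2) ^ (p / (p - 1))
        = m * (‖χ y‖ ^ 2 - ‖φ y‖ ^ 2) + lam * (‖χ y‖ ^ 2 + ‖φ y‖ ^ 2)
          + (p - 1) / p * (‖χ y‖ ^ 2 + ‖φ y‖ ^ 2) ^ (p / (p - 1))) ∧
    (∀ x y : ℝ,
      (starRingEnd ℂ) (χ x) * φ x - (starRingEnd ℂ) (φ x) * χ x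
        = (starRingEnd ℂ) (χ y) * φ y - (starRingEnd ℂ) (φ y) * χ y) := by
  have hp1 : p - 1 ≠ 0 := by linarith
  have hp0 : p ≠ 0 := by linarith
  -- derivatives of φ and χ as HasDerivAt
  set s : ℝ → ℝ := fun x => (‖φ x‖ ^ 2 + ‖χ x‖ ^ 2) ^ (1 / (p - 1)) with hs
  have hφx : ∀ x, HasDerivAt φ (-(((lam + m + s x : ℝ)) : ℂ) * χ x) x := fun x => by
    have := (hφ x).hasDerivAt
    rwa [hode x] at this
  have hχx : ∀ x, HasDerivAt χ ((((lam - m + s x : ℝ)) : ℂ) * φ x) x := fun x => by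
    have := (hχ x).hasDerivAt
    rwa [hode' x] at this
  -- derivatives of |φ|² and |χ|²
  have hR : ∀ x, ((starRingEnd ℂ) (χ x) * φ x).re = ((starRingEnd ℂ) (φ x) * χ x).re :=
    fun x => re_conj_swap (χ x) (φ x)
  have hf : ∀ x, HasDerivAt (fun x => ‖φ x‖ ^ 2)
      (-2 * (lam + m + s x) * ((starRingEnd ℂ) (φ x) * χ x).re) x := fun x => by
    have := hasDerivAt_normSq' (hφx x)
    convert this using 1
    rw [show (starRingEnd ℂ) (φ x) * (-(((lam + m + s x : ℝ)) : ℂ) * χ x)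
        = -(((lam + m + s x : ℝ)) : ℂ) * ((starRingEnd ℂ) (φ x) * χ x) by ring]
    simp [Complex.ofReal_mul]
    ring
  have hg : ∀ x, HasDerivAt (fun x => ‖χ x‖ ^ 2)
      (2 * (lam - m + s x) * ((starRingEnd ℂ) (φ x) * χ x).re) x := fun x => by
    have := hasDerivAt_normSq' (hχx x)
    convert this using 1
    rw [show (starRingEnd ℂ) (χ x) * ((((lam - m + s x : ℝ)) : ℂ) * φ x)
        = (((lam - m + s x : ℝ)) : ℂ) * ((starRingEnd ℂ) (χ x) * φ x) by ring]
    simp [hR x]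
    ring
  constructor
  · -- H conservation
    set H : ℝ → ℝ := fun x =>
      m * (‖χ x‖ ^ 2 - ‖φ x‖ ^ 2) + lam * (‖χ x‖ ^ 2 + ‖φ x‖ ^ 2)
        + (p - 1) / p * (‖χ x‖ ^ 2 + ‖φ x‖ ^ 2) ^ (p / (p - 1)) with hH
    have key : ∀ x, HasDerivAt H 0 x := by
      intro x
      set R := ((starRingEnd ℂ) (φ x) * χ x).re with hRdef
      have hN : HasDerivAt (fun x => ‖χ x‖ ^ 2 + ‖φ x‖ ^ 2)
          (2 * (lam - m + s x) * R + -2 * (lam + m + s x) * R) x := (hg x).add (hf x)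
      have hq1 : (1 : ℝ) ≤ p / (p - 1) := by
        rw [le_div_iff₀ (by linarith)]; linarith
      have hpow := (Real.hasDerivAt_rpow_const
          (x := ‖χ x‖ ^ 2 + ‖φ x‖ ^ 2) (p := p / (p - 1)) (Or.inr hq1)).comp x hN
      have hexp : p / (p - 1) - 1 = 1 / (p - 1) := by field_simp; ring
      have hNs : (‖χ x‖ ^ 2 + ‖φ x‖ ^ 2) ^ (p / (p - 1) - 1) = s x := by
        rw [hexp, hs]; ring_nf
      have hD : HasDerivAt H
          (m * (2 * (lam - m + s x) * R - -2 * (lam + m + s x) * R)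
            + lam * (2 * (lam - m + s x) * R + -2 * (lam + m + s x) * R)
            + (p - 1) / p * (p / (p - 1) * (‖χ x‖ ^ 2 + ‖φ x‖ ^ 2) ^ (p / (p - 1) - 1)
                * (2 * (lam - m + s x) * R + -2 * (lam + m + s x) * R))) x := by
        exact ((((hg x).sub (hf x)).const_mul m).add (hN.const_mul lam)).add
          (hpow.const_mul ((p - 1) / p))
      have hzero : (m * (2 * (lam - m + s x) * R - -2 * (lam + m + s x) * R)
            + lam * (2 * (lam - m + s x) * R + -2 * (lam + m + s x) * R)
            + (p - 1) / p * (p / (p - 1) * (‖χ x‖ ^ 2 + ‖φ x‖ ^ 2) ^ (p / (p - 1) - 1)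
                * (2 * (lam - m + s x) * R + -2 * (lam + m + s x) * R))) = 0 := by
        rw [hNs]
        field_simp
        ring
      rwa [hzero] at hD
    exact is_const_of_deriv_eq_zero (fun x => (key x).differentiableAt)
      (fun x => (key x).deriv)
  · -- G conservation
    set G : ℝ → ℂ := fun x =>
      (starRingEnd ℂ) (χ x) * φ x - (starRingEnd ℂ) (φ x) * χ x with hG
    have key : ∀ x, HasDerivAt G 0 x := by
      intro x
      have h1 : HasDerivAt G
          ((star ((((lam - m + s x : ℝ)) : ℂ) * φ x) * φ x
              + star (χ x) * (-(((lam + m + s x : ℝ)) : ℂ) * χ x))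
            - (star (-(((lam + m + s x : ℝ)) : ℂ) * χ x) * χ x
              + star (φ x) * ((((lam - m + s x : ℝ)) : ℂ) * φ x))) x :=
        ((hχx x).star.mul (hφx x)).sub ((hφx x).star.mul (hχx x))
      convert h1 using 1
      simp only [star_mul', star_neg, Complex.star_def, Complex.conj_ofReal]
      ring
    exact is_const_of_deriv_eq_zero (fun x => (key x).differentiableAt)
      (fun x => (key x).deriv)
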